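/- Let G be an extraspecial or almost extraspecial 2-group of order 2^n with n ≥ 3. Then the number of cyclic subgroups of order 4 in G is at least the number of cyclic subgroups of order 4 in D8 × C2^{n-3}, and consequently the number of subgroups of G isomorphic to C2 × C2 containing Φ(G) is at most the corresponding number for D8 × C2^{n-3}. -/

import Mathlib

/-- `C2` : the cyclic group of order 2. -/
abbrev C2 := Multiplicative (ZMod 2)

/-- A finite 2-group is extraspecial if its center, derived subgroup and Frattini subgroup
coincide and have order 2. -/
def IsExtraspecial (G : Type*) [Group G] : Prop :=
  Subgroup.center G = commutator G ∧ commutator G = frattini G ∧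
    Nat.card (Subgroup.center G) = 2

/-- A finite 2-group is almost extraspecial if its derived subgroup and Frattini subgroup
coincide and have order 2 and its center is cyclic of order 4. -/
def IsAlmostExtraspecial (G : Type*) [Group G] : Prop :=
  commutator G = frattini G ∧ Nat.card (commutator G) = 2 ∧
    Nat.card (Subgroup.center G) = 4 ∧ IsCyclic (Subgroup.center G)

/-- The number of cyclic subgroups of order 4 of `G`. -/
noncomputable def c4 (G : Type*) [Group G] : ℕ :=
  Nat.card {H : Subgroup G // IsCyclic H ∧ Nat.card H = 4}

/-- The number of subgroups of `G` isomorphic to `C2 × C2` containing the Frattini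
subgroup of `G`. -/
noncomputable def e2 (G : Type*) [Group G] : ℕ :=
  Nat.card {H : Subgroup G // Nat.card H = 4 ∧ (∀ g ∈ H, g ^ 2 = 1) ∧ frattini G ≤ H}

open Subgroup


lemma isCoatom_of_index_two {G : Type*} [Group G] {M : Subgroup G} (h : M.index = 2) :
    IsCoatom M := by
  constructor
  · intro hM; rw [hM, Subgroup.index_top] at h; omega
  · intro K hK
    have hle := hK.le
    have hmul := Subgroup.relIndex_mul_index hle
    rw [h] at hmul
    have hrel : M.relIndex K ≠ 1 := by
      intro h1
      rw [Subgroup.relIndex_eq_one] at h1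
      exact absurd (le_antisymm hle h1) hK.ne
    have h2 : M.relIndex K = 2 :=
      (Nat.prime_two.eq_one_or_self_of_dvd _ ⟨_, hmul.symm⟩).resolve_left hrel
    rw [h2] at hmul
    rw [← Subgroup.index_eq_one]
    omega

/-- In a finite 2-group, every square lies in the Frattini subgroup. -/
lemma sq_mem_frattini {G : Type*} [Group G] [Finite G] {n : ℕ} (hG : Nat.card G = 2 ^ n)
    (x : G) : x ^ 2 ∈ frattini G := by
  have hpG : IsPGroup 2 G := IsPGroup.of_card hG
  have : Fact (Nat.Prime 2) := ⟨Nat.prime_two⟩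
  have hnil : Group.IsNilpotent G := hpG.isNilpotent
  show x ^ 2 ∈ Order.radical (Subgroup G)
  rw [Order.radical]
  refine Subgroup.mem_iInf.2 fun M => Subgroup.mem_iInf.2 fun hM => ?_
  have hnorm : M.Normal :=
    NormalizerCondition.normal_of_coatom M normalizerCondition_of_isNilpotent hM
  set Q := G ⧸ M with hQdef
  have hQp : IsPGroup 2 Q := hpG.to_quotient M
  obtain ⟨j, hj⟩ : ∃ j, Nat.card Q = 2 ^ j := hQp.exists_card_eq
  have hQne1 : Nat.card Q ≠ 1 := by
    intro h1
    have : M.index = 1 := by rw [Subgroup.index_eq_card, h1]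
    exact hM.1 (Subgroup.index_eq_one.1 this)
  have hj1 : 1 ≤ j := by by_contra hj0; interval_cases j <;> simp_all
  have hQ2 : Nat.card Q = 2 := by
    by_contra hne
    have hj2 : 2 ≤ j := by by_contra hl; interval_cases j <;> omega
    obtain ⟨g, hg⟩ : ∃ g : Q, g ≠ 1 := by
      have : Nontrivial Q := Finite.one_lt_card_iff_nontrivial.1 (by
        rw [hj]; calc 1 < 2 ^ 1 := by norm_num
                  _ ≤ 2 ^ j := Nat.pow_le_pow_right (by norm_num) hj1)
      exact exists_ne 1
    obtain ⟨k, hk⟩ := hQp g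
    obtain ⟨i, hik, hio⟩ := (Nat.dvd_prime_pow Nat.prime_two).1 (orderOf_dvd_of_pow_eq_one hk)
    have hi1 : 1 ≤ i := by
      rcases Nat.eq_zero_or_pos i with h0 | h; · rw [h0, pow_zero] at hio; exact absurd (orderOf_eq_one_iff.1 hio) hg
      · exact h
    set h : Q := g ^ 2 ^ (i - 1) with hhdef
    have hh2 : h ^ 2 = 1 := by
      rw [hhdef, ← pow_mul, ← pow_succ, show i - 1 + 1 = i by omega, ← hio, pow_orderOf_eq_one]
    have hhne : h ≠ 1 := by
      intro h1
      have : orderOf g ∣ 2 ^ (i - 1) := orderOf_dvd_of_pow_eq_one h1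
      rw [hio] at this
      have := Nat.le_of_dvd (by positivity) this
      have := Nat.pow_lt_pow_right (a := 2) (by norm_num) (show i - 1 < i by omega)
      omega
    have hordh : orderOf h = 2 := orderOf_eq_prime hh2 hhne
    set K : Subgroup G := Subgroup.comap (QuotientGroup.mk' M) (zpowers h) with hKdef
    have hMK : M ≤ K := by
      intro m hm
      simp only [hKdef, Subgroup.mem_comap]
      have : QuotientGroup.mk' M m = 1 := by
        rw [← QuotientGroup.ker_mk' M] at hm; exact hm
      rw [this]; exact one_mem _
    obtain ⟨x0, hx0⟩ := QuotientGroup.mk'_surjective M h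
    have hx0K : x0 ∈ K := by
      simp only [hKdef, Subgroup.mem_comap, hx0]
      exact Subgroup.mem_zpowers h
    have hx0M : x0 ∉ M := by
      intro hmem
      have : QuotientGroup.mk' M x0 = 1 := (QuotientGroup.eq_one_iff x0).2 hmem
      rw [hx0] at this; exact hhne this
    have hMltK : M < K := lt_of_le_of_ne hMK (fun hEq => hx0M (hEq ▸ hx0K))
    have hKtop : K = ⊤ := hM.2 K hMltK
    -- but zpowers h ≠ ⊤ in Q
    have hzcard : Nat.card (zpowers h) = 2 := by rw [Nat.card_zpowers, hordh]
    have : (zpowers h : Subgroup Q) ≠ ⊤ := by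
      intro htop
      rw [htop, Subgroup.card_top, hj] at hzcard
      have := Nat.pow_le_pow_right (show 0 < 2 by norm_num) hj2
      omega
    obtain ⟨q, hq⟩ : ∃ q : Q, q ∉ zpowers h := by
      by_contra hall; push_neg at hall
      exact this ((Subgroup.eq_top_iff' _).2 hall)
    obtain ⟨x1, hx1⟩ := QuotientGroup.mk'_surjective M q
    have : x1 ∈ K := hKtop ▸ Subgroup.mem_top x1
    simp only [hKdef, Subgroup.mem_comap, hx1] at this
    exact hq this
  have : (QuotientGroup.mk x : Q) ^ 2 = 1 := by rw [← hQ2]; exact pow_card_eq_one'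
  rwa [← QuotientGroup.mk_pow, QuotientGroup.eq_one_iff] at this

lemma isCyclic_zpowers {G : Type*} [Group G] (g : G) : IsCyclic (zpowers g) := by
  constructor
  refine ⟨⟨g, mem_zpowers g⟩, fun x => ?_⟩
  obtain ⟨k, hk⟩ := x.2
  exact ⟨k, Subtype.ext (by simpa using hk)⟩

lemma zpowers_coe_eq {G : Type*} [Group G] {H : Subgroup G} (g : ↥H)
    (hg : ∀ x : ↥H, x ∈ zpowers g) : zpowers (g : G) = H := by
  have h1 : zpowers (g : G) = Subgroup.map H.subtype (zpowers g) :=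
    (MonoidHom.map_zpowers H.subtype g).symm
  have h2 : zpowers g = (⊤ : Subgroup ↥H) := by
    rw [eq_top_iff]; exact fun x _ => hg x
  rw [h1, h2, ← MonoidHom.range_eq_map, Subgroup.range_subtype]

/-- A cyclic subgroup of order 4 is `zpowers x` for an element of order 4. -/
lemma c4_mem_iff {G : Type*} [Group G] (H : Subgroup G) :
    (IsCyclic H ∧ Nat.card H = 4) ↔ ∃ x : G, orderOf x = 4 ∧ zpowers x = H := by
  constructor
  · rintro ⟨hc, hcard⟩
    obtain ⟨g, hg⟩ := hc.exists_generator
    have hz : zpowers (g : G) = H := zpowers_coe_eq g hg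
    refine ⟨g, ?_, hz⟩
    rw [← Nat.card_zpowers, hz, hcard]
  · rintro ⟨x, hx, rfl⟩
    exact ⟨_root_.isCyclic_zpowers x, by rw [Nat.card_zpowers, hx]⟩

lemma two_mul_c4 (K : Type*) [Group K] [Finite K] :
    2 * c4 K = Nat.card {x : K // orderOf x = 4} := by
  classical
  have := Fintype.ofFinite K
  set s : Finset K := Finset.univ.filter (fun x => orderOf x = 4) with hs
  have hmem : ∀ x, x ∈ s ↔ orderOf x = 4 := by
    intro x; simp [hs]
  set f : K → Subgroup K := fun x => zpowers x with hf
  have hfib : ∀ b ∈ s.image f, (s.filter (fun x => f x = b)).card = 2 := by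
    intro b hb
    obtain ⟨x0, hx0s, hx0⟩ := Finset.mem_image.1 hb
    have hx0' : zpowers x0 = b := hx0
    have hx04 : orderOf x0 = 4 := (hmem x0).1 hx0s
    have hx0pow : x0 ^ 4 = 1 := by rw [← hx04]; exact pow_orderOf_eq_one x0
    have hinv : x0⁻¹ = x0 ^ 3 := by
      rw [eq_comm, eq_inv_iff_mul_eq_one, ← pow_succ, hx0pow]
    have hne : x0 ≠ x0⁻¹ := by
      intro h
      have : x0 ^ 2 = 1 := by
        rw [pow_two]; nth_rewrite 2 [h]; exact mul_inv_cancel x0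
      have := orderOf_dvd_of_pow_eq_one this
      rw [hx04] at this; omega
    have hset : s.filter (fun x => f x = b) = {x0, x0⁻¹} := by
      ext x
      simp only [Finset.mem_filter, Finset.mem_insert, Finset.mem_singleton, hmem]
      constructor
      · rintro ⟨hx4, hxb⟩
        have hxb' : zpowers x = b := hxb
        have hxz : x ∈ zpowers x0 := by
          have hx : x ∈ zpowers x := mem_zpowers x
          rwa [hxb', ← hx0'] at hx
        obtain ⟨m, hm⟩ := mem_powers_iff_mem_zpowers.2 hxz
        have hm' : x0 ^ m = x := hm
        have hm4 : orderOf (x0 ^ m) = 4 := by rw [hm']; exact hx4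
        rw [orderOf_pow, hx04] at hm4
        have h1 : Nat.gcd 4 m ∣ 4 := Nat.gcd_dvd_left 4 m
        have hgcd : Nat.gcd 4 m = 1 := by
          have h2 := Nat.mul_div_cancel' h1
          rw [hm4] at h2; omega
        have hodd : ¬ (2 ∣ m) := by
          intro h2
          have := Nat.dvd_gcd (show (2:ℕ) ∣ 4 by norm_num) h2
          rw [hgcd] at this
          exact absurd (Nat.le_of_dvd one_pos this) (by omega)
        have hx' : x = x0 ^ (m % 4) := by
          rw [← hm']; nth_rewrite 1 [← pow_mod_orderOf]; rw [hx04]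
        have hm2 : m % 2 = 1 := Nat.two_dvd_ne_zero.mp hodd
        have : m % 4 = 1 ∨ m % 4 = 3 := by omega
        rcases this with h1 | h1
        · left; rw [hx', h1, pow_one]
        · right; rw [hx', h1, hinv]
      · rintro (rfl | rfl)
        · exact ⟨hx04, hx0⟩
        · refine ⟨by rw [orderOf_inv, hx04], ?_⟩
          show zpowers x0⁻¹ = b
          rw [zpowers_inv]; exact hx0'
    rw [hset, Finset.card_pair hne]
  have hcard : s.card = 2 * (s.image f).card := by
    rw [Finset.card_eq_sum_card_image f s, Finset.sum_congr rfl hfib, Finset.sum_const,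
      smul_eq_mul, mul_comm]
  have h1 : Nat.card {x : K // orderOf x = 4} = s.card := by
    rw [Nat.card_eq_fintype_card, Fintype.card_subtype]
  have h2 : c4 K = (s.image f).card := by
    rw [c4, Nat.card_eq_fintype_card, Fintype.card_subtype]
    apply Finset.card_bij (fun H _ => H)
    · intro H hH
      simp only [Finset.mem_filter, Finset.mem_univ, true_and] at hH
      rw [c4_mem_iff] at hH
      obtain ⟨x, hx4, hxH⟩ := hH
      exact Finset.mem_image.2 ⟨x, (hmem x).2 hx4, by rw [hf]; exact hxH⟩
    · intro a _ b _ h; exact h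
    · intro H hH
      obtain ⟨x, hxs, hx⟩ := Finset.mem_image.1 hH
      refine ⟨H, ?_, rfl⟩
      simp only [Finset.mem_filter, Finset.mem_univ, true_and]
      exact (c4_mem_iff H).2 ⟨x, (hmem x).1 hxs, hx⟩
  rw [h1, h2, hcard]

section Gauss
variable {G : Type*} [Group G] [Fintype G] {z : G}

lemma gauss_bound (hz1 : z ≠ 1) (hz2 : z ^ 2 = 1) (hzc : ∀ g : G, g * z = z * g)
    (hsq : ∀ x : G, x ^ 2 = 1 ∨ x ^ 2 = z)
    (hcomm : ∀ x u : G, x⁻¹ * u * x * u⁻¹ = 1 ∨ x⁻¹ * u * x * u⁻¹ = z) :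
    (2 * (Nat.card {x : G // x ^ 2 = 1} : ℤ) - Nat.card G) ^ 2
      ≤ (Nat.card G : ℤ) * Nat.card (Subgroup.center G) := by
  classical
  have hNG : (Nat.card G : ℤ) = (Fintype.card G : ℤ) := by rw [Nat.card_eq_fintype_card]
  have hA : (Nat.card {x : G // x ^ 2 = 1} : ℤ)
      = ((Finset.univ.filter (fun x : G => x ^ 2 = 1)).card : ℤ) := by
    rw [Nat.card_eq_fintype_card, Fintype.card_subtype]
  rw [hNG, hA]
  set χ : G → ℤ := fun g => if g = 1 then 1 else -1 with hχ
  have chiz : χ z = -1 := by simp [hχ, hz1]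
  have chi1 : χ 1 = 1 := by simp [hχ]
  have chi_sq : ∀ a : G, χ a * χ a = 1 := by
    intro a; simp only [hχ]; split <;> norm_num
  have chi_le : ∀ a : G, χ a ≤ 1 := by
    intro a; simp only [hχ]; split <;> norm_num
  have chi_mul : ∀ a b : G, (a = 1 ∨ a = z) → (b = 1 ∨ b = z) → χ (a * b) = χ a * χ b := by
    rintro a b (rfl | rfl) (rfl | rfl) <;>
      simp [hχ, hz1, ← pow_two, hz2]
  have memcl : ∀ a b : G, (a = 1 ∨ a = z) → (b = 1 ∨ b = z) → (a * b = 1 ∨ a * b = z) := by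
    rintro a b (rfl | rfl) (rfl | rfl) <;> simp [← pow_two, hz2]
  set k : G → G → G := fun x u => x⁻¹ * u * x * u⁻¹ with hk
  have hkmem : ∀ x u : G, k x u = 1 ∨ k x u = z := fun x u => hcomm x u
  -- key identity
  have hkey : ∀ x u : G, (x * u) ^ 2 = x ^ 2 * u ^ 2 * k x u := by
    intro x u
    have h1 : (x * u) ^ 2 = x ^ 2 * (x⁻¹ * u * x * u⁻¹) * u ^ 2 := by
      rw [pow_two, pow_two, pow_two]; group
    rcases hcomm x u with h | h <;> rw [h1, h] <;>
        [show x ^ 2 * 1 * u ^ 2 = x ^ 2 * u ^ 2 * (x⁻¹ * u * x * u⁻¹);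
         show x ^ 2 * z * u ^ 2 = x ^ 2 * u ^ 2 * (x⁻¹ * u * x * u⁻¹)] <;> rw [h]
    · group
    · rw [mul_assoc, mul_assoc, ← hzc (u ^ 2)]
  set T : ℤ := ∑ x : G, χ (x ^ 2) with hT
  -- T^2 as a double sum
  have step1 : T ^ 2 = ∑ x : G, ∑ u : G, χ (u ^ 2) * χ (k x u) := by
    rw [pow_two, hT, Finset.sum_mul_sum]
    refine Finset.sum_congr rfl fun x _ => ?_
    rw [show ∑ y : G, χ (x ^ 2) * χ (y ^ 2)
        = ∑ u : G, χ (x ^ 2) * χ ((x * u) ^ 2) from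
      (Fintype.sum_equiv (Equiv.mulLeft x) _ _ (fun u => rfl)).symm]
    refine Finset.sum_congr rfl fun u _ => ?_
    rw [hkey x u, chi_mul _ _ (memcl _ _ (hsq x) (hsq u)) (hkmem x u),
      chi_mul _ _ (hsq x) (hsq u), ← mul_assoc, ← mul_assoc, chi_sq, one_mul]
  -- inner sum
  have inner : ∀ u : G, (∑ x : G, χ (k x u)) =
      if u ∈ Subgroup.center G then (Fintype.card G : ℤ) else 0 := by
    intro u
    by_cases hu : u ∈ Subgroup.center G
    · rw [if_pos hu]
      rw [Subgroup.mem_center_iff] at hu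
      have : ∀ x : G, k x u = 1 := by
        intro x
        show x⁻¹ * u * x * u⁻¹ = 1
        rw [mul_assoc x⁻¹ u x, ← hu x]
        group
      simp [this, chi1]
    · rw [if_neg hu]
      rw [Subgroup.mem_center_iff] at hu
      push_neg at hu
      obtain ⟨g, hg⟩ := hu
      have hg1 : k g u ≠ 1 := by
        intro h
        apply hg
        have : g⁻¹ * u * g * u⁻¹ = 1 := h
        have h2 : u * g = g * u := by
          have := congrArg (fun w => g * w * u) this
          simpa [mul_assoc] using this
        rw [h2]
      have hgz : k g u = z := (hkmem g u).resolve_left hg1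
      -- reindex by x ↦ g * x
      have hrw : ∀ x : G, k (g * x) u = z * k x u := by
        intro x
        have h2 : u * g = g * z * u := by
          have : u * g = g * (g⁻¹ * u * g * u⁻¹) * u := by group
          rw [show g⁻¹ * u * g * u⁻¹ = z from hgz] at this
          exact this
        show (g * x)⁻¹ * u * (g * x) * u⁻¹ = z * (x⁻¹ * u * x * u⁻¹)
        calc (g * x)⁻¹ * u * (g * x) * u⁻¹ = x⁻¹ * (g⁻¹ * (u * g)) * (x * u⁻¹) := by group
          _ = x⁻¹ * (g⁻¹ * (g * z * u)) * (x * u⁻¹) := by rw [h2]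
          _ = x⁻¹ * z * (u * (x * u⁻¹)) := by group
          _ = z * (x⁻¹ * u * x * u⁻¹) := by rw [hzc x⁻¹]; group
      have : (∑ x : G, χ (k x u)) = ∑ x : G, χ (k (g * x) u) :=
        (Fintype.sum_equiv (Equiv.mulLeft g) _ _ (fun x => rfl)).symm
      rw [show (∑ x : G, χ (k (g * x) u)) = ∑ x : G, -χ (k x u) from
        Finset.sum_congr rfl fun x _ => by
          rw [hrw x, chi_mul _ _ (Or.inr rfl) (hkmem x u), chiz]; ring] at this
      rw [Finset.sum_neg_distrib] at this
      linarith
  have step2 : T ^ 2 = ∑ u : G, χ (u ^ 2) *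
      (if u ∈ Subgroup.center G then (Fintype.card G : ℤ) else 0) := by
    rw [step1, Finset.sum_comm]
    exact Finset.sum_congr rfl fun u _ => by rw [← Finset.mul_sum, inner u]
  have step3 : T ^ 2 = ∑ u ∈ Finset.univ.filter (fun u : G => u ∈ Subgroup.center G),
      χ (u ^ 2) * (Fintype.card G : ℤ) := by
    rw [step2, Finset.sum_filter]
    refine Finset.sum_congr rfl fun u _ => ?_
    by_cases hu : u ∈ Subgroup.center G <;> simp [hu]
  have hbound : T ^ 2 ≤ (Fintype.card G : ℤ) * Nat.card (Subgroup.center G) := by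
    rw [step3]
    have hcard : ((Finset.univ.filter (fun u : G => u ∈ Subgroup.center G)).card : ℤ)
        = Nat.card (Subgroup.center G) := by
      rw [Nat.card_eq_fintype_card, Fintype.card_subtype]
    calc ∑ u ∈ Finset.univ.filter (fun u : G => u ∈ Subgroup.center G),
        χ (u ^ 2) * (Fintype.card G : ℤ)
        ≤ ∑ _u ∈ Finset.univ.filter (fun u : G => u ∈ Subgroup.center G),
          (1 : ℤ) * (Fintype.card G : ℤ) := by
          refine Finset.sum_le_sum fun u _ => ?_
          have := chi_le (u ^ 2)
          have hN : (0:ℤ) ≤ (Fintype.card G : ℤ) := by positivity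
          exact mul_le_mul_of_nonneg_right this hN
      _ = ((Finset.univ.filter (fun u : G => u ∈ Subgroup.center G)).card : ℤ)
          * (Fintype.card G : ℤ) := by rw [Finset.sum_const]; ring
      _ = (Fintype.card G : ℤ) * Nat.card (Subgroup.center G) := by rw [hcard]; ring
  -- express T via the filter card
  have hTval : T = 2 * ((Finset.univ.filter (fun x : G => x ^ 2 = 1)).card : ℤ)
      - Fintype.card G := by
    rw [hT]
    rw [show (∑ x : G, χ (x ^ 2)) = ∑ x : G, (if x ^ 2 = 1 then (1:ℤ) else -1) from rfl]
    rw [Finset.sum_ite, Finset.sum_const, Finset.sum_const]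
    have := Finset.card_filter_add_card_filter_not
      (s := (Finset.univ : Finset G)) (p := fun x => x ^ 2 = 1)
    simp only [Finset.card_univ] at this
    push_cast
    rw [← this]
    push_cast
    ring
  rw [← hTval]
  exact hbound

end Gauss

lemma subgroup_eq_of_le_of_card_le {G : Type*} [Group G] [Finite G] {H K : Subgroup G}
    (hle : H ≤ K) (hc : Nat.card K ≤ Nat.card H) : H = K := by
  apply SetLike.coe_injective
  have c1 : Nat.card H = ((H : Subgroup G) : Set G).ncard := Nat.card_coe_set_eq _
  have c2 : Nat.card K = ((K : Subgroup G) : Set G).ncard := Nat.card_coe_set_eq _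
  apply Set.eq_of_subset_of_ncard_le (SetLike.coe_subset_coe.2 hle)
  rw [← c1, ← c2]
  exact hc

lemma mem_zpowers_pair {G : Type*} [Group G] [Finite G] {z a : G} (hz2 : z ^ 2 = 1)
    (ha : a ∈ Subgroup.zpowers z) : a = 1 ∨ a = z := by
  obtain ⟨m, hm⟩ := mem_powers_iff_mem_zpowers.mpr ha
  have hm' : z ^ m = a := hm
  have key : z ^ m = z ^ (m % 2) := by
    conv_lhs => rw [← Nat.div_add_mod m 2]
    rw [pow_add, pow_mul, hz2, one_pow, one_mul]
  rcases Nat.mod_two_eq_zero_or_one m with h2 | h2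
  · left; rw [← hm', key, h2, pow_zero]
  · right; rw [← hm', key, h2, pow_one]

structure GoodAux (G : Type*) [Group G] (n : ℕ) (z : G) : Prop where
  hn : 3 ≤ n
  hG : Nat.card G = 2 ^ n
  hz1 : z ≠ 1
  hz2 : z ^ 2 = 1
  hzc : ∀ g, g * z = z * g
  hfr : frattini G = Subgroup.zpowers z
  hsq : ∀ x : G, x ^ 2 = 1 ∨ x ^ 2 = z

namespace GoodAux

variable {G : Type*} [Group G] [Finite G] {n : ℕ} {z : G} (h : GoodAux G n z)

section
include h

lemma zz : z * z = 1 := by rw [← pow_two]; exact h.hz2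

lemma quad_set {x : G} (hx1 : x ≠ 1) (hxz : x ≠ z) :
    ((zpowers z ⊔ zpowers x : Subgroup G) : Set G) = {1, z, x, x * z} := by
  have hzz := h.zz
  have hzx : z * x = x * z := (h.hzc x).symm
  have hxx := h.hsq x
  rw [pow_two] at hxx
  have hzz' : ∀ w : G, z * (z * w) = w := by
    intro w; rw [← mul_assoc, hzz, one_mul]
  have hzx' : ∀ w : G, z * (x * w) = x * (z * w) := by
    intro w; rw [← mul_assoc, hzx, mul_assoc]
  have hsub : ∃ S : Subgroup G, (S : Set G) = {1, z, x, x * z} := by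
    refine ⟨⟨⟨⟨{1, z, x, x * z}, ?_⟩, ?_⟩, ?_⟩, rfl⟩
    · -- mul_mem
      intro a b ha hb
      simp only [Set.mem_insert_iff, Set.mem_singleton_iff] at ha hb ⊢
      rcases ha with ha | ha | ha | ha <;> rcases hb with hb | hb | hb | hb <;>
        rw [ha, hb] <;>
        rcases hxx with hx2 | hx2 <;>
        first
          | (have hxx'' : ∀ w : G, x * (x * w) = w := by
               intro w; rw [← mul_assoc, hx2, one_mul]
             simp [mul_assoc, hzz, hzz', hzx, hzx', hx2, hxx''])
          | (have hxx'' : ∀ w : G, x * (x * w) = z * w := by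
               intro w; rw [← mul_assoc, hx2]
             simp [mul_assoc, hzz, hzz', hzx, hzx', hx2, hxx''])
    · left; rfl
    · -- inv_mem
      rintro a (rfl | rfl | rfl | rfl) <;>
        simp only [Set.mem_insert_iff, Set.mem_singleton_iff]
      · left; exact inv_one
      · right; left; exact inv_eq_of_mul_eq_one_right hzz
      · rcases hxx with hx2 | hx2
        · right; right; left; exact inv_eq_of_mul_eq_one_right hx2
        · right; right; right
          refine inv_eq_of_mul_eq_one_right ?_
          rw [← mul_assoc, hx2, hzz]
      · rcases hxx with hx2 | hx2
        · right; right; right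
          refine inv_eq_of_mul_eq_one_right ?_
          rw [mul_assoc, hzx', hzz, mul_one, hx2]
        · right; right; left
          refine inv_eq_of_mul_eq_one_right ?_
          rw [mul_assoc, hzx, ← mul_assoc, hx2, hzz]
  obtain ⟨S, hS⟩ := hsub
  have h1 : (zpowers z ⊔ zpowers x : Subgroup G) ≤ S := by
    refine sup_le ?_ ?_ <;> rw [zpowers_le]
    · show z ∈ (S : Set G); rw [hS]; right; left; rfl
    · show x ∈ (S : Set G); rw [hS]; right; right; left; rfl
  have h2 : ({1, z, x, x * z} : Set G) ⊆ (zpowers z ⊔ zpowers x : Subgroup G) := by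
    have hzm : z ∈ (zpowers z ⊔ zpowers x : Subgroup G) :=
      SetLike.le_def.1 le_sup_left (mem_zpowers z)
    have hxm : x ∈ (zpowers z ⊔ zpowers x : Subgroup G) :=
      SetLike.le_def.1 le_sup_right (mem_zpowers x)
    rintro a (rfl | rfl | rfl | rfl)
    · exact one_mem _
    · exact hzm
    · exact hxm
    · exact mul_mem hxm hzm
  refine Set.Subset.antisymm ?_ h2
  intro a ha
  rw [← hS]
  exact h1 ha

lemma not_one_z_mul {x : G} (hx1 : x ≠ 1) (hxz : x ≠ z) :
    x * z ≠ 1 ∧ x * z ≠ z ∧ x * z ≠ x := by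
  refine ⟨?_, ?_, ?_⟩
  · intro he
    apply hxz
    have : x * z * z = 1 * z := by rw [he]
    rwa [mul_assoc, h.zz, mul_one, one_mul] at this
  · intro he
    apply hx1
    have : x * z * z = z * z := by rw [he]
    rwa [mul_assoc, h.zz, mul_one] at this
  · intro he
    apply h.hz1
    have := mul_left_cancel (a := x) (b := z) (c := 1) (by rwa [mul_one])
    exact this

lemma quad_ncard {x : G} (hx1 : x ≠ 1) (hxz : x ≠ z) :
    ({1, z, x, x * z} : Set G).ncard = 4 := by
  obtain ⟨hm1, hm2, hm3⟩ := h.not_one_z_mul hx1 hxz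
  rw [Set.ncard_insert_of_notMem (by
      simp only [Set.mem_insert_iff, Set.mem_singleton_iff]
      push_neg
      exact ⟨fun e => h.hz1 e.symm, fun e => hx1 e.symm, fun e => hm1 e.symm⟩),
    Set.ncard_insert_of_notMem (by
      simp only [Set.mem_insert_iff, Set.mem_singleton_iff]
      push_neg
      exact ⟨fun e => hxz e.symm, fun e => hm2 e.symm⟩),
    Set.ncard_insert_of_notMem (by
      simp only [Set.mem_singleton_iff]
      exact fun e => hm3 e.symm),
    Set.ncard_singleton]

lemma quad_card {x : G} (hx1 : x ≠ 1) (hxz : x ≠ z) :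
    Nat.card (zpowers z ⊔ zpowers x : Subgroup G) = 4 := by
  have e1 : Nat.card (zpowers z ⊔ zpowers x : Subgroup G)
      = ((zpowers z ⊔ zpowers x : Subgroup G) : Set G).ncard :=
    Nat.card_coe_set_eq _
  rw [e1, h.quad_set hx1 hxz, h.quad_ncard hx1 hxz]

/-- Number of subgroups of order 4 containing the Frattini subgroup. -/
lemma count_N :
    2 * Nat.card {K : Subgroup G // Nat.card K = 4 ∧ frattini G ≤ K} + 2 = 2 ^ n := by
  classical
  have := Fintype.ofFinite G
  set s : Finset G := Finset.univ.filter (fun x : G => ¬(x = 1 ∨ x = z)) with hs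
  have hmes : ∀ x : G, x ∈ s ↔ (x ≠ 1 ∧ x ≠ z) := by intro x; simp [hs, not_or]
  set f : G → Subgroup G := fun x => zpowers z ⊔ zpowers x with hf
  have hscard : s.card + 2 = 2 ^ n := by
    have hpart := Finset.card_filter_add_card_filter_not
      (s := (Finset.univ : Finset G)) (p := fun x : G => x = 1 ∨ x = z)
    have h2 : (Finset.univ.filter (fun x : G => x = 1 ∨ x = z)).card = 2 := by
      have he : Finset.univ.filter (fun x : G => x = 1 ∨ x = z) = {1, z} := by
        ext a; simp
      rw [he, Finset.card_pair (fun e => h.hz1 e.symm)]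
    have hcardG : (Finset.univ : Finset G).card = 2 ^ n := by
      rw [Finset.card_univ, ← Nat.card_eq_fintype_card, h.hG]
    rw [h2, hcardG] at hpart
    have hsc : s.card = (Finset.filter (fun a : G => ¬(a = 1 ∨ a = z)) Finset.univ).card := rfl
    omega
  have hfib : ∀ b ∈ s.image f, (s.filter (fun x => f x = b)).card = 2 := by
    intro b hb
    obtain ⟨x0, hx0s, hx0⟩ := Finset.mem_image.1 hb
    obtain ⟨hx01, hx0z⟩ := (hmes x0).1 hx0s
    obtain ⟨hm1, hm2, hm3⟩ := h.not_one_z_mul hx01 hx0z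
    have hx0' : zpowers z ⊔ zpowers x0 = b := hx0
    have hfxz : f (x0 * z) = b := by
      show zpowers z ⊔ zpowers (x0 * z) = b
      rw [← hx0']
      apply SetLike.coe_injective
      rw [h.quad_set hm1 hm2, h.quad_set hx01 hx0z]
      have : x0 * z * z = x0 := by rw [mul_assoc, h.zz, mul_one]
      rw [this]
      ext a
      simp only [Set.mem_insert_iff, Set.mem_singleton_iff]
      tauto
    have hset : s.filter (fun x => f x = b) = {x0, x0 * z} := by
      ext x
      simp only [Finset.mem_filter, Finset.mem_insert, Finset.mem_singleton, hmes]
      constructor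
      · rintro ⟨⟨hx1, hxz⟩, hxb⟩
        have hxb' : zpowers z ⊔ zpowers x = b := hxb
        have hxmem : x ∈ b := by
          rw [← hxb']
          exact SetLike.le_def.1 le_sup_right (mem_zpowers x)
        have : x ∈ ((zpowers z ⊔ zpowers x0 : Subgroup G) : Set G) := by
          rw [hx0']; exact hxmem
        rw [h.quad_set hx01 hx0z] at this
        rcases this with rfl | rfl | rfl | rfl
        · exact absurd rfl hx1
        · exact absurd rfl hxz
        · left; rfl
        · right; rfl
      · rintro (rfl | rfl)
        · exact ⟨⟨hx01, hx0z⟩, hx0⟩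
        · exact ⟨⟨hm1, hm2⟩, hfxz⟩
    rw [hset, Finset.card_pair (fun e => hm3 e.symm)]
  have himg : s.card = 2 * (s.image f).card := by
    rw [Finset.card_eq_sum_card_image f s, Finset.sum_congr rfl hfib, Finset.sum_const,
      smul_eq_mul, mul_comm]
  have hN : Nat.card {K : Subgroup G // Nat.card K = 4 ∧ frattini G ≤ K}
      = (s.image f).card := by
    rw [Nat.card_eq_fintype_card, Fintype.card_subtype]
    apply Finset.card_bij (fun H _ => H)
    · intro H hH
      simp only [Finset.mem_filter, Finset.mem_univ, true_and] at hH
      obtain ⟨hH4, hHfr⟩ := hH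
      have hzK : z ∈ H := by
        rw [h.hfr] at hHfr
        exact hHfr (mem_zpowers z)
      obtain ⟨x, hxH, hx1, hxz⟩ : ∃ x ∈ H, x ≠ 1 ∧ x ≠ z := by
        by_contra hc
        push_neg at hc
        have hsub : (H : Set G) ⊆ {1, z} := by
          intro a ha
          rcases eq_or_ne a 1 with h1 | h1
          · left; exact h1
          · right; exact hc a ha h1
        have hle : Nat.card H ≤ 2 := by
          have e1 : Nat.card H = ((H : Subgroup G) : Set G).ncard := Nat.card_coe_set_eq _
          rw [e1]
          calc ((H : Subgroup G) : Set G).ncard ≤ ({1, z} : Set G).ncard :=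
                Set.ncard_le_ncard hsub (Set.toFinite _)
            _ ≤ 2 := by
                rw [Set.ncard_pair (fun e => h.hz1 e.symm)]
        omega
      have hle : f x ≤ H := sup_le (zpowers_le.2 hzK) (zpowers_le.2 hxH)
      have heq : f x = H := by
        apply SetLike.coe_injective
        have c1 : ((f x : Subgroup G) : Set G).ncard = 4 := by
          rw [← Nat.card_coe_set_eq]; exact h.quad_card hx1 hxz
        have c2 : ((H : Subgroup G) : Set G).ncard = 4 := by
          rw [← Nat.card_coe_set_eq]; exact hH4
        apply Set.eq_of_subset_of_ncard_le (SetLike.coe_subset_coe.2 hle)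
        rw [c1, c2]
      rw [← heq]
      exact Finset.mem_image.2 ⟨x, (hmes x).2 ⟨hx1, hxz⟩, rfl⟩
    · intro a _ b _ hab; exact hab
    · intro H hH
      obtain ⟨x, hxs, hx⟩ := Finset.mem_image.1 hH
      obtain ⟨hx1, hxz⟩ := (hmes x).1 hxs
      refine ⟨H, ?_, rfl⟩
      simp only [Finset.mem_filter, Finset.mem_univ, true_and]
      constructor
      · rw [← hx]; exact h.quad_card hx1 hxz
      · rw [← hx, h.hfr]; exact le_sup_left
  omega

lemma order_four_of_sq_eq {x : G} (hx : x ^ 2 = z) : orderOf x = 4 := by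
  have : Fact (Nat.Prime 2) := ⟨Nat.prime_two⟩
  have h4 : x ^ (2 : ℕ) ^ 2 = 1 := by
    rw [show (2:ℕ)^2 = 2*2 from rfl, pow_mul, hx, h.hz2]
  have h2 : x ^ (2 : ℕ) ^ 1 ≠ 1 := by
    rw [pow_one, hx]; exact h.hz1
  have := orderOf_eq_prime_pow h2 h4
  rwa [show (2:ℕ)^2 = 4 from rfl] at this

lemma partition :
    c4 G + e2 G = Nat.card {K : Subgroup G // Nat.card K = 4 ∧ frattini G ≤ K} := by
  classical
  set A : Set (Subgroup G) := {H | IsCyclic H ∧ Nat.card H = 4} with hA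
  set B : Set (Subgroup G) := {H | Nat.card H = 4 ∧ (∀ g ∈ H, g ^ 2 = 1) ∧ frattini G ≤ H}
    with hB
  set C : Set (Subgroup G) := {H | Nat.card H = 4 ∧ frattini G ≤ H} with hC
  have hAC : A ⊆ C := by
    intro H hH
    obtain ⟨x, hx4, hxH⟩ := (c4_mem_iff H).1 hH
    have hx2 : x ^ 2 = z := by
      rcases h.hsq x with h1 | h1
      · exfalso
        have := orderOf_dvd_of_pow_eq_one h1
        rw [hx4] at this; omega
      · exact h1
    have hzH : z ∈ H := by
      rw [← hx2, ← hxH]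
      exact pow_mem (mem_zpowers x) 2
    exact ⟨hH.2, by rw [h.hfr]; exact zpowers_le.2 hzH⟩
  have hcover : C = A ∪ B := by
    apply Set.Subset.antisymm
    · intro K hK
      obtain ⟨hK4, hKfr⟩ := hK
      by_cases hall : ∀ g ∈ K, g ^ 2 = 1
      · right; exact ⟨hK4, hall, hKfr⟩
      · left
        push_neg at hall
        obtain ⟨x, hxK, hx2⟩ := hall
        have hxz : x ^ 2 = z := (h.hsq x).resolve_left hx2
        have hord : orderOf x = 4 := h.order_four_of_sq_eq hxz
        have hle : zpowers x ≤ K := zpowers_le.2 hxK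
        have heq : zpowers x = K := subgroup_eq_of_le_of_card_le hle
          (by rw [Nat.card_zpowers, hord, hK4])
        exact (c4_mem_iff K).2 ⟨x, hord, heq⟩
    · exact Set.union_subset hAC (fun H hH => ⟨hH.1, hH.2.2⟩)
  have hdisj : Disjoint A B := by
    rw [Set.disjoint_left]
    intro H hHA hHB
    obtain ⟨x, hx4, hxH⟩ := (c4_mem_iff H).1 hHA
    have hxmem : x ∈ H := by rw [← hxH]; exact mem_zpowers x
    have := hHB.2.1 x hxmem
    have := orderOf_dvd_of_pow_eq_one this
    rw [hx4] at this; omega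
  have e1 : c4 G = A.ncard := by rw [c4, ← Nat.card_coe_set_eq]; rfl
  have e2' : e2 G = B.ncard := by rw [e2, ← Nat.card_coe_set_eq]; rfl
  have e3 : Nat.card {K : Subgroup G // Nat.card K = 4 ∧ frattini G ≤ K} = C.ncard := by
    rw [← Nat.card_coe_set_eq]; rfl
  rw [e1, e2', e3, hcover, Set.ncard_union_eq hdisj (Set.toFinite _) (Set.toFinite _)]

lemma count_sum : 2 * (c4 G + e2 G) + 2 = 2 ^ n := by
  rw [h.partition]; exact h.count_N

lemma c4_lower
    (hcm : ∀ x u : G, x⁻¹ * u * x * u⁻¹ = 1 ∨ x⁻¹ * u * x * u⁻¹ = z)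
    (hZ : Nat.card (Subgroup.center G) ≤ 2 ^ (n - 2)) :
    2 ^ (n - 3) ≤ c4 G := by
  classical
  have := Fintype.ofFinite G
  have hn3 := h.hn
  set c : ℕ := 2 ^ (n - 3) with hc
  have hc8 : (2:ℕ) ^ n = 8 * c := by
    rw [hc, show (8:ℕ) = 2 ^ 3 from rfl, ← pow_add]
    congr 1
    omega
  have hc2 : (2:ℕ) ^ (n - 2) = 2 * c := by
    rw [hc, ← pow_succ']
    congr 1
    omega
  set A : ℕ := Nat.card {x : G // x ^ 2 = 1} with hA
  set B : ℕ := Nat.card {x : G // x ^ 2 = z} with hB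
  have hAB : A + B = 2 ^ n := by
    have eA : A = {x : G | x ^ 2 = 1}.ncard := by rw [hA, ← Nat.card_coe_set_eq]; rfl
    have eB : B = {x : G | x ^ 2 = z}.ncard := by rw [hB, ← Nat.card_coe_set_eq]; rfl
    rw [eA, eB,
      ← Set.ncard_union_eq (by
        rw [Set.disjoint_left]
        rintro a ha hb
        rw [Set.mem_setOf_eq] at ha hb
        exact h.hz1 (by rw [← ha, hb])) (Set.toFinite _) (Set.toFinite _)]
    have : ({x : G | x ^ 2 = 1} ∪ {x : G | x ^ 2 = z}) = Set.univ := by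
      apply Set.eq_univ_of_forall
      intro x
      rcases h.hsq x with h1 | h1
      · left; exact h1
      · right; exact h1
    rw [this, Set.ncard_univ, h.hG]
  have hgauss := gauss_bound h.hz1 h.hz2 h.hzc h.hsq hcm
  rw [h.hG] at hgauss
  have hZ' : (Nat.card (Subgroup.center G) : ℤ) ≤ 2 * c := by
    have : Nat.card (Subgroup.center G) ≤ 2 * c := hc2 ▸ hZ
    exact_mod_cast this
  have hA6 : (A : ℤ) ≤ 6 * c := by
    have hcpos : (0:ℤ) < (c:ℤ) := by positivity
    rw [← hA, hc8] at hgauss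
    push_cast at hgauss
    nlinarith [hgauss, sq_nonneg ((2 * (A:ℤ) - 8 * c) - 4 * c), hZ', hcpos]
  have hA6' : A ≤ 6 * c := by exact_mod_cast hA6
  have hB2 : 2 * c ≤ B := by omega
  have h2c4 : 2 * c4 G = Nat.card {x : G // orderOf x = 4} := two_mul_c4 G
  have hBle : B ≤ Nat.card {x : G // orderOf x = 4} := by
    have e1 : B = {x : G | x ^ 2 = z}.ncard := by rw [hB, ← Nat.card_coe_set_eq]; rfl
    have e2'' : Nat.card {x : G // orderOf x = 4} = {x : G | orderOf x = 4}.ncard := by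
      rw [← Nat.card_coe_set_eq]; rfl
    rw [e1, e2'']
    apply Set.ncard_le_ncard _ (Set.toFinite _)
    intro x hx
    exact h.order_four_of_sq_eq hx
  omega

end
end GoodAux

lemma index_two_of_hom_C2 {K : Type*} [Group K] [Finite K] (φ : K →* C2) (g0 : K)
    (hg : φ g0 ≠ 1) : (MonoidHom.ker φ).index = 2 := by
  have hsurj : Function.Surjective φ := by
    intro c
    rcases eq_or_ne c 1 with rfl | hc
    · exact ⟨1, map_one φ⟩
    · have hC2 : ∀ c d : C2, c ≠ 1 → d ≠ 1 → c = d := by decide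
      exact ⟨g0, hC2 (φ g0) c hg hc⟩
  rw [Subgroup.index_ker]
  have : φ.range = ⊤ := MonoidHom.range_eq_top.2 hsurj
  rw [this, Subgroup.card_top]
  rw [Nat.card_eq_fintype_card]; decide

namespace DihedralSide

def f1 : DihedralGroup 4 →* C2 :=
  { toFun := fun x => match x with
      | .r i => Multiplicative.ofAdd (i.val : ZMod 2)
      | .sr i => Multiplicative.ofAdd (i.val : ZMod 2)
    map_one' := by decide
    map_mul' := by decide }

def f2 : DihedralGroup 4 →* C2 :=
  { toFun := fun x => match x with
      | .r _ => 1
      | .sr _ => Multiplicative.ofAdd 1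
    map_one' := by decide
    map_mul' := by decide }

variable (k : ℕ)

abbrev H0 := DihedralGroup 4 × (Fin k → C2)

def z0 : H0 k := (DihedralGroup.r 2, 1)

lemma card_H0 : Nat.card (H0 k) = 2 ^ (k + 3) := by
  rw [Nat.card_prod, Nat.card_fun, Nat.card_eq_fintype_card (α := DihedralGroup 4)]
  rw [show Fintype.card (DihedralGroup 4) = 8 by decide]
  rw [Nat.card_eq_fintype_card (α := C2), show Fintype.card C2 = 2 by decide,
    Nat.card_eq_fintype_card (α := Fin k), Fintype.card_fin]
  rw [pow_add]
  norm_num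
  ring

lemma v_sq (v : Fin k → C2) : v ^ 2 = 1 := by
  funext i
  show (v i) ^ 2 = 1
  revert i
  intro i
  generalize v i = c
  revert c; decide

lemma hsq0 : ∀ x : H0 k, x ^ 2 = 1 ∨ x ^ 2 = z0 k := by
  rintro ⟨a, v⟩
  have hv : v ^ 2 = 1 := v_sq k v
  have ha : a ^ 2 = 1 ∨ a ^ 2 = DihedralGroup.r 2 := by revert a; decide
  have hpow : (a, v) ^ 2 = (a ^ 2, v ^ 2) := rfl
  rcases ha with h1 | h1
  · left; rw [hpow, h1, hv]; rfl
  · right; rw [hpow, h1, hv]; rfl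

lemma hzc0 : ∀ g : H0 k, g * z0 k = z0 k * g := by
  rintro ⟨a, v⟩
  have : a * DihedralGroup.r 2 = DihedralGroup.r 2 * a := by revert a; decide
  show (a * DihedralGroup.r 2, v * 1) = (DihedralGroup.r 2 * a, 1 * v)
  rw [this, mul_one, one_mul]

lemma hz0_ne : z0 k ≠ 1 := by
  intro h
  have : (DihedralGroup.r 2 : DihedralGroup 4) = 1 := congrArg Prod.fst h
  revert this; decide

lemma hz0_sq : z0 k ^ 2 = 1 := by
  have : (z0 k) ^ 2 = ((DihedralGroup.r 2 : DihedralGroup 4) ^ 2, (1 : Fin k → C2) ^ 2) := rfl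
  rw [this, show (DihedralGroup.r 2 : DihedralGroup 4) ^ 2 = 1 by decide, one_pow]
  rfl

lemma frattini_H0 : frattini (H0 k) = zpowers (z0 k) := by
  have key : ∀ a : DihedralGroup 4, a ≠ 1 → a ≠ DihedralGroup.r 2 → (f1 a ≠ 1 ∨ f2 a ≠ 1) := by
    decide
  apply le_antisymm
  · -- frattini ≤ zpowers z0
    intro g hg
    by_contra hgz
    have hgne : g ≠ 1 ∧ g ≠ z0 k := by
      constructor
      · intro h1; exact hgz (h1 ▸ one_mem _)
      · intro h1; exact hgz (h1 ▸ mem_zpowers _)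
    obtain ⟨a, v⟩ := g
    -- find a hom to C2 not killing g
    have : ∃ φ : H0 k →* C2, φ (a, v) ≠ 1 := by
      by_cases hv : v = 1
      · subst hv
        have ha1 : a ≠ 1 := by
          intro h1
          exact hgne.1 (by rw [h1]; rfl)
        have ha2 : a ≠ DihedralGroup.r 2 := by
          intro h1
          exact hgne.2 (by rw [h1]; rfl)
        rcases key a ha1 ha2 with h1 | h1
        · exact ⟨f1.comp (MonoidHom.fst _ _), h1⟩
        · exact ⟨f2.comp (MonoidHom.fst _ _), h1⟩
      · obtain ⟨i, hi⟩ : ∃ i, v i ≠ 1 := by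
          by_contra hc
          push_neg at hc
          exact hv (funext hc)
        exact ⟨(Pi.evalMonoidHom (fun _ => C2) i).comp (MonoidHom.snd _ _), hi⟩
    obtain ⟨φ, hφ⟩ := this
    have hcoatom : IsCoatom (MonoidHom.ker φ) :=
      isCoatom_of_index_two (index_two_of_hom_C2 φ (a, v) hφ)
    have := frattini_le_coatom hcoatom hg
    exact hφ this
  · rw [zpowers_le]
    have : z0 k = (DihedralGroup.r 1, (1 : Fin k → C2)) ^ 2 := by
      have : ((DihedralGroup.r 1 : DihedralGroup 4), (1 : Fin k → C2)) ^ 2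
          = ((DihedralGroup.r 1 : DihedralGroup 4) ^ 2, (1 : Fin k → C2) ^ 2) := rfl
      rw [this, show (DihedralGroup.r 1 : DihedralGroup 4) ^ 2 = DihedralGroup.r 2 by decide,
        one_pow]
      rfl
    rw [this]
    exact sq_mem_frattini (card_H0 k) _

lemma goodH0 : GoodAux (H0 k) (k + 3) (z0 k) where
  hn := by omega
  hG := card_H0 k
  hz1 := hz0_ne k
  hz2 := hz0_sq k
  hzc := hzc0 k
  hfr := frattini_H0 k
  hsq := hsq0 k

lemma c4_H0 : c4 (H0 k) = 2 ^ k := by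
  have h2 : 2 * c4 (H0 k) = Nat.card {x : H0 k // orderOf x = 4} := two_mul_c4 _
  have hset : {x : H0 k | orderOf x = 4} = {x : H0 k | x ^ 2 = z0 k} := by
    ext x
    simp only [Set.mem_setOf_eq]
    constructor
    · intro hx
      rcases hsq0 k x with h1 | h1
      · exfalso
        have := orderOf_dvd_of_pow_eq_one h1
        rw [hx] at this; omega
      · exact h1
    · intro hx
      exact (goodH0 k).order_four_of_sq_eq hx
  have hcard : Nat.card {x : H0 k // orderOf x = 4} = Nat.card {x : H0 k // x ^ 2 = z0 k} := by
    have e1 : Nat.card {x : H0 k // orderOf x = 4} = {x : H0 k | orderOf x = 4}.ncard := by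
      rw [← Nat.card_coe_set_eq]; rfl
    have e2 : Nat.card {x : H0 k // x ^ 2 = z0 k} = {x : H0 k | x ^ 2 = z0 k}.ncard := by
      rw [← Nat.card_coe_set_eq]; rfl
    rw [e1, e2, hset]
  -- compute the number of solutions of x^2 = z0
  have hsol : Nat.card {x : H0 k // x ^ 2 = z0 k} = 2 ^ (k + 1) := by
    have he : {x : H0 k // x ^ 2 = z0 k}
        ≃ {a : DihedralGroup 4 // a ^ 2 = DihedralGroup.r 2} × (Fin k → C2) := by
      refine ⟨fun x => (⟨x.1.1, ?_⟩, x.1.2), fun y => ⟨(y.1.1, y.2), ?_⟩, ?_, ?_⟩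
      · have := x.2
        have hx : (x.1.1 ^ 2, x.1.2 ^ 2) = (DihedralGroup.r 2, 1) := this
        exact (Prod.ext_iff.1 hx).1
      · have : (y.1.1 ^ 2, y.2 ^ 2) = ((DihedralGroup.r 2 : DihedralGroup 4), (1 : Fin k → C2)) := by
          rw [y.1.2, v_sq k y.2]
        exact this
      · intro x; apply Subtype.ext; rfl
      · intro y; rfl
    rw [Nat.card_congr he, Nat.card_prod,
      show Nat.card {a : DihedralGroup 4 // a ^ 2 = DihedralGroup.r 2} = 2 by
        rw [Nat.card_eq_fintype_card]; decide,
      Nat.card_fun, Nat.card_eq_fintype_card (α := C2), show Fintype.card C2 = 2 by decide,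
      Nat.card_eq_fintype_card (α := Fin k), Fintype.card_fin, pow_succ]
    ring
  rw [hsol] at hcard
  rw [hcard, pow_succ] at h2
  omega

end DihedralSide

open scoped commutatorElement in
lemma good_of_X {G : Type*} [Group G] [Finite G] {n : ℕ} (hn : 3 ≤ n)
    (hG : Nat.card G = 2 ^ n) (hX : IsExtraspecial G ∨ IsAlmostExtraspecial G) :
    ∃ z : G, GoodAux G n z ∧ (∀ x u : G, x⁻¹ * u * x * u⁻¹ = 1 ∨ x⁻¹ * u * x * u⁻¹ = z)
      ∧ Nat.card (Subgroup.center G) ≤ 2 ^ (n - 2) := by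
  haveI : Fact (Nat.Prime 2) := ⟨Nat.prime_two⟩
  have hcf : commutator G = frattini G := by
    rcases hX with hX | hX
    · exact hX.2.1
    · exact hX.1
  have hcard2 : Nat.card (commutator G) = 2 := by
    rcases hX with hX | hX
    · rw [← hX.1]; exact hX.2.2
    · exact hX.2.1
  have hfr2 : Nat.card (frattini G) = 2 := by rw [← hcf]; exact hcard2
  have : Nontrivial (frattini G) := by
    apply Finite.one_lt_card_iff_nontrivial.1
    rw [hfr2]; omega
  obtain ⟨y, hy⟩ := exists_ne (1 : frattini G)
  set z : G := (y : G) with hzdef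
  have hz1 : z ≠ 1 := by
    intro h1
    exact hy (by ext; exact h1)
  have hzmem : z ∈ frattini G := y.2
  have hz2 : z ^ 2 = 1 := by
    have h1 : y ^ 2 = 1 := by
      have := pow_card_eq_one' (G := frattini G) (x := y)
      rwa [hfr2] at this
    have := congrArg (Subtype.val) h1
    simpa using this
  have hordz : orderOf z = 2 := orderOf_eq_prime hz2 hz1
  have hfr : frattini G = zpowers z := by
    refine (subgroup_eq_of_le_of_card_le (zpowers_le.2 hzmem) ?_).symm
    rw [hfr2, Nat.card_zpowers, hordz]
  have hpair : ∀ a ∈ frattini G, a = 1 ∨ a = z := by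
    intro a ha
    rw [hfr] at ha
    exact mem_zpowers_pair hz2 ha
  have hcomm_mem : ∀ x u : G, x⁻¹ * u * x * u⁻¹ ∈ frattini G := by
    intro x u
    rw [← hcf]
    have he : x⁻¹ * u * x * u⁻¹ = ⁅x⁻¹, u⁆ := by
      rw [commutatorElement_def, inv_inv]
    rw [he]
    exact commutator_mem_commutator (mem_top _) (mem_top _)
  have hcm : ∀ x u : G, x⁻¹ * u * x * u⁻¹ = 1 ∨ x⁻¹ * u * x * u⁻¹ = z :=
    fun x u => hpair _ (hcomm_mem x u)
  have hzc : ∀ g : G, g * z = z * g := by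
    intro g
    have h1 : g⁻¹ * z * g * z⁻¹ = 1 ∨ g⁻¹ * z * g * z⁻¹ = z := hcm g z
    rcases h1 with h1 | h1
    · have : g⁻¹ * z * g = z := by
        have := congrArg (· * z) h1
        simpa [mul_assoc] using this
      have h4 := congrArg (g * ·) this
      have h5 : z * g = g * z := by simpa [← mul_assoc] using h4
      exact h5.symm
    · -- g⁻¹ z g z⁻¹ = z would give g⁻¹ z g = z * z = z², i.e. conj of z is z² = 1, impossible
      exfalso
      have h2 : g⁻¹ * z * g = z * z := by
        have := congrArg (· * z) h1
        simpa [mul_assoc] using this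
      rw [← pow_two, hz2] at h2
      have : z = 1 := by
        have := congrArg (fun w => g * w * g⁻¹) h2
        simpa [mul_assoc] using this
      exact hz1 this
  have hsq : ∀ x : G, x ^ 2 = 1 ∨ x ^ 2 = z :=
    fun x => hpair _ (sq_mem_frattini hG x)
  refine ⟨z, ⟨hn, hG, hz1, hz2, hzc, hfr, hsq⟩, hcm, ?_⟩
  rcases hX with hX | hX
  · rw [hX.2.2, show (2:ℕ) = 2 ^ 1 from rfl]
    exact Nat.pow_le_pow_right (by norm_num) (by omega)
  · have hn4 : 4 ≤ n := by
      by_contra hlt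
      have hn3 : n = 3 := by omega
      have hcardG : Nat.card G = 8 := by rw [hG, hn3]; norm_num
      have hidx : (Subgroup.center G).index = 2 := by
        have := Subgroup.card_mul_index (Subgroup.center G)
        rw [hX.2.2.1, hcardG] at this
        omega
      have hqcard : Nat.card (G ⧸ Subgroup.center G) = 2 := by
        rw [← Subgroup.index_eq_card, hidx]
      have : IsCyclic (G ⧸ Subgroup.center G) := isCyclic_of_prime_card hqcard
      have hab : ∀ a b : G, a * b = b * a :=
        commutative_of_cyclic_center_quotient (QuotientGroup.mk' (Subgroup.center G))
          (le_of_eq (QuotientGroup.ker_mk' _))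
      have hbot : commutator G = ⊥ := by
        rw [_root_.commutator_def, eq_bot_iff]
        apply Subgroup.commutator_le.2
        intro g₁ _ g₂ _
        rw [Subgroup.mem_bot, commutatorElement_eq_one_iff_commute]
        exact hab g₁ g₂
      rw [hbot, Subgroup.card_bot] at hcard2
      omega
    rw [hX.2.2.1, show (4:ℕ) = 2 ^ 2 from rfl]
    exact Nat.pow_le_pow_right (by norm_num) (by omega)


theorem c4_ge_and_e2_le (G : Type*) [Group G] [Finite G] (n : ℕ) (hn : 3 ≤ n)
    (hG : Nat.card G = 2 ^ n) (hX : IsExtraspecial G ∨ IsAlmostExtraspecial G) :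
    c4 (DihedralGroup 4 × (Fin (n - 3) → C2)) ≤ c4 G ∧
      e2 G ≤ e2 (DihedralGroup 4 × (Fin (n - 3) → C2)) := by
  obtain ⟨z, hgood, hcm, hZ⟩ := good_of_X hn hG hX
  have goodH := DihedralSide.goodH0 (n - 3)
  rw [show n - 3 + 3 = n by omega] at goodH
  have hc4H : c4 (DihedralGroup 4 × (Fin (n - 3) → C2)) = 2 ^ (n - 3) :=
    DihedralSide.c4_H0 (n - 3)
  have hc4G : 2 ^ (n - 3) ≤ c4 G := hgood.c4_lower hcm hZ
  have hsumG : 2 * (c4 G + e2 G) + 2 = 2 ^ n := hgood.count_sum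
  have hsumH : 2 * (c4 (DihedralGroup 4 × (Fin (n - 3) → C2))
      + e2 (DihedralGroup 4 × (Fin (n - 3) → C2))) + 2 = 2 ^ n := goodH.count_sum
  constructor
  · rw [hc4H]; exact hc4G
  · omega
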